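/- Let C(x) = (1/2)·log₂(1+x). For every P > 0 and N > 0 there exist nonnegative reals R₁, R₂, R₃ and an α ∈ [0,1] satisfying R₁ < C(αP/N), R₂ < C((1-α)P/(αP+N)), and R₃ < C((1-α)P/(αP+N)), such that for every α' ∈ [0,1] the four conditions R₁ < C(α'P/N), R₂ < C((1-α')P/(α'P+N)), R₃ < C((1-α')P/(α'P+N)), and R₂ + R₃ < C((1-α')P/(α'P+N)) cannot all hold simultaneously. (This shows that, for the three-receiver AWGN broadcast channel with equal noise variances N₁ = N₂ = N₃ = N, the scheme using multiplexing coding and superposition coding without index coding, whose achievable region requires the additional sum-rate condition R₂ + R₃ < C((1-α')P/(α'P+N₁)), cannot achieve the capacity region.) -/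
import Mathlib


/-- The AWGN capacity function `C(x) = (1/2) · log₂(1 + x)`. -/
noncomputable def awgnC (x : ℝ) : ℝ := (1 / 2) * Real.logb 2 (1 + x)

lemma awgnC_lt_awgnC {x y : ℝ} (hx : 0 ≤ x) (hxy : x < y) : awgnC x < awgnC y := by
  unfold awgnC
  have : Real.logb 2 (1 + x) < Real.logb 2 (1 + y) :=
    Real.logb_lt_logb (by norm_num) (by linarith) (by linarith)
  linarith

lemma awgnC_le_awgnC {x y : ℝ} (hx : 0 ≤ x) (hxy : x ≤ y) : awgnC x ≤ awgnC y := by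
  rcases eq_or_lt_of_le hxy with h | h
  · rw [h]
  · exact le_of_lt (awgnC_lt_awgnC hx h)

lemma awgnC_zero : awgnC 0 = 0 := by simp [awgnC]

/-- For the three-receiver AWGN BC with equal noise variances `N`, there is a rate triple
in the capacity region (achieved with some power split `α`) that violates, for every power
split `α'`, the extra sum-rate condition `R₂ + R₃ < C((1-α')P/(α'P+N))` required by the
scheme using multiplexing and superposition coding without index coding; hence that scheme
cannot achieve the capacity region. -/
theorem multiplexing_without_index_coding_suboptimal
    (P N : ℝ) (hP : 0 < P) (hN : 0 < N) :
    ∃ R₁ R₂ R₃ α : ℝ, 0 ≤ R₁ ∧ 0 ≤ R₂ ∧ 0 ≤ R₃ ∧ 0 ≤ α ∧ α ≤ 1 ∧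
      R₁ < awgnC (α * P / N) ∧
      R₂ < awgnC ((1 - α) * P / (α * P + N)) ∧
      R₃ < awgnC ((1 - α) * P / (α * P + N)) ∧
      ∀ α' : ℝ, 0 ≤ α' → α' ≤ 1 →
        ¬ (R₁ < awgnC (α' * P / N) ∧
           R₂ < awgnC ((1 - α') * P / (α' * P + N)) ∧
           R₃ < awgnC ((1 - α') * P / (α' * P + N)) ∧
           R₂ + R₃ < awgnC ((1 - α') * P / (α' * P + N))) := by
  have hPN : 0 < P / N := div_pos hP hN
  set t : ℝ := Real.sqrt (1 + P / N) - 1 with ht_def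
  have hs1 : (1 : ℝ) < Real.sqrt (1 + P / N) := by
    have h := Real.sqrt_lt_sqrt (by norm_num : (0:ℝ) ≤ 1) (by linarith : (1:ℝ) < 1 + P / N)
    simpa using h
  have ht0 : 0 < t := by simp [ht_def]; linarith
  have htPN : t < P / N := by
    have h : Real.sqrt (1 + P / N) < 1 + P / N := by
      rw [Real.sqrt_lt' (by linarith)]
      nlinarith
    simp only [ht_def]; linarith
  have htN : t * N < P := (lt_div_iff₀ hN).mp htPN
  set α : ℝ := (P - t * N) / (2 * P * (1 + t)) with hα_def
  have hden : 0 < 2 * P * (1 + t) := by nlinarith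
  have hα0 : 0 < α := div_pos (by linarith) hden
  have hα1 : α < 1 := by
    rw [hα_def, div_lt_one hden]; nlinarith
  have hαPN : 0 < α * P + N := by nlinarith
  -- key: t < (1-α)P/(αP+N)
  have hkey : t < (1 - α) * P / (α * P + N) := by
    rw [lt_div_iff₀ hαPN]
    have hαval : α * (2 * P * (1 + t)) = P - t * N := by
      rw [hα_def]; field_simp
    nlinarith
  -- 2 * awgnC t = awgnC (P/N)
  have hsum : awgnC t + awgnC t = awgnC (P / N) := by
    unfold awgnC
    have h1t : 1 + t = Real.sqrt (1 + P / N) := by simp [ht_def]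
    rw [h1t]
    have : Real.logb 2 (Real.sqrt (1 + P / N)) = Real.logb 2 (1 + P / N) / 2 := by
      unfold Real.logb
      rw [Real.log_sqrt (by linarith)]
      ring
    rw [this]; ring
  refine ⟨0, awgnC t, awgnC t, α, le_refl 0, ?_, ?_, le_of_lt hα0, le_of_lt hα1, ?_, ?_, ?_, ?_⟩
  · rw [← awgnC_zero]; exact awgnC_le_awgnC le_rfl (le_of_lt ht0)
  · rw [← awgnC_zero]; exact awgnC_le_awgnC le_rfl (le_of_lt ht0)
  · rw [← awgnC_zero]
    exact awgnC_lt_awgnC le_rfl (div_pos (mul_pos hα0 hP) hN)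
  · exact awgnC_lt_awgnC (le_of_lt ht0) hkey
  · exact awgnC_lt_awgnC (le_of_lt ht0) hkey
  · intro α' hα'0 hα'1 ⟨_, _, _, h4⟩
    have hαPN' : 0 < α' * P + N := by nlinarith
    have hle : (1 - α') * P / (α' * P + N) ≤ P / N := by
      rw [div_le_div_iff₀ hαPN' hN]
      nlinarith [mul_nonneg hα'0 (mul_pos hP hN).le, mul_nonneg hα'0 (mul_pos hP hP).le]
    have hnn : 0 ≤ (1 - α') * P / (α' * P + N) :=
      div_nonneg (by nlinarith) (le_of_lt hαPN')
    have := awgnC_le_awgnC hnn hle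
    rw [← hsum] at this
    linarith
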